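/- Let B_0 = { [[a,b],[0,d]] ∈ SL_*(2,A_m) } be the set of upper triangular matrices in SL_*(2,A_m). Then B_0 is a subgroup of SL_*(2,A_m) and SL_*(2,A_m) = B_0 ∪ B_0 w B_0 ∪ B_0 w B_0 w B_0, where w = [[0,1],[−1,0]]; in particular SL_*(2,A_m) is generated by the Bruhat generators h(t) (t ∈ A_m^×), u(b) (b ∈ A_m^s) and w, and has Bruhat (w-)length 2. -/

import Mathlib

open Polynomial

set_option synthInstance.maxHeartbeats 1000000
set_option maxHeartbeats 1600000

/-- The truncated polynomial algebra `A_m = k[x]/⟨x^m⟩`. -/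
abbrev TruncPoly (k : Type*) [Field k] (m : ℕ) :=
  Polynomial k ⧸ Ideal.span {(Polynomial.X : Polynomial k) ^ m}

/-- The class of `x` in `A_m = k[x]/⟨x^m⟩`. -/
noncomputable def xbar (k : Type*) [Field k] (m : ℕ) : TruncPoly k m :=
  Ideal.Quotient.mk _ (Polynomial.X : Polynomial k)

/-- The set `SL_*(2,A)` for a commutative ring `A` equipped with an involution `σ`. -/
def SLstarSet {A : Type*} [CommRing A] (σ : A → A) : Set (Matrix (Fin 2) (Fin 2) A) :=
  {g | g 0 0 * σ (g 0 1) = g 0 1 * σ (g 0 0) ∧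
       g 1 0 * σ (g 1 1) = g 1 1 * σ (g 1 0) ∧
       σ (g 0 0) * g 1 0 = σ (g 1 0) * g 0 0 ∧
       σ (g 0 1) * g 1 1 = σ (g 1 1) * g 0 1 ∧
       g 0 0 * σ (g 1 1) - g 0 1 * σ (g 1 0) = 1 ∧
       σ (g 0 0) * g 1 1 - σ (g 1 0) * g 0 1 = 1}

/-- The Bruhat generator `h(t) = [[t, 0],[0, (t*)⁻¹]]`. -/
def hM {A : Type*} [CommRing A] (σ : A →* A) (t : Aˣ) : Matrix (Fin 2) (Fin 2) A :=
  !![(t : A), 0; 0, ((Units.map σ t)⁻¹ : Aˣ)]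

/-- The Bruhat generator `u(s) = [[1, s],[0, 1]]`. -/
def uM {A : Type*} [CommRing A] (s : A) : Matrix (Fin 2) (Fin 2) A :=
  !![1, s; 0, 1]

/-- The Bruhat generator `w = [[0, 1],[−1, 0]]`. -/
def wM (A : Type*) [CommRing A] : Matrix (Fin 2) (Fin 2) A :=
  !![0, 1; -1, 0]

lemma truncPoly_nontrivial {k : Type*} [Field k] {m : ℕ} (hm : 0 < m) :
    Nontrivial (TruncPoly k m) := by
  refine Ideal.Quotient.nontrivial_iff.mpr ?_
  rw [Ne, Ideal.span_singleton_eq_top]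
  intro h
  have := Polynomial.natDegree_eq_zero_of_isUnit h
  simp [Polynomial.natDegree_X_pow] at this
  omega

lemma truncPoly_isNilpotent_of_not_isUnit {k : Type*} [Field k] {m : ℕ}
    {a : TruncPoly k m} (h : ¬ IsUnit a) : IsNilpotent a := by
  obtain ⟨p, rfl⟩ := Ideal.Quotient.mk_surjective a
  by_cases h0 : p.coeff 0 = 0
  · obtain ⟨q, rfl⟩ := Polynomial.X_dvd_iff.2 h0
    refine ⟨m, ?_⟩
    rw [← map_pow, Ideal.Quotient.eq_zero_iff_mem, mul_pow]
    exact Ideal.mem_span_singleton.2 (Dvd.intro _ rfl)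
  · exfalso; apply h
    have key : (Ideal.Quotient.mk (Ideal.span {(Polynomial.X : Polynomial k) ^ m}) p)
        = Ideal.Quotient.mk _ (p - Polynomial.C (p.coeff 0)) +
          Ideal.Quotient.mk _ (Polynomial.C (p.coeff 0)) := by
      rw [← map_add]; congr 1; ring
    rw [key]
    obtain ⟨q, hq⟩ := Polynomial.X_dvd_iff.2
      (by simp : (p - Polynomial.C (p.coeff 0)).coeff 0 = 0)
    have hnil : IsNilpotent (Ideal.Quotient.mk
        (Ideal.span {(Polynomial.X : Polynomial k) ^ m}) (p - Polynomial.C (p.coeff 0))) := by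
      refine ⟨m, ?_⟩
      rw [← map_pow, Ideal.Quotient.eq_zero_iff_mem, hq, mul_pow]
      exact Ideal.mem_span_singleton.2 (Dvd.intro _ rfl)
    have hu : IsUnit (Ideal.Quotient.mk
        (Ideal.span {(Polynomial.X : Polynomial k) ^ m}) (Polynomial.C (p.coeff 0))) :=
      (Polynomial.isUnit_C.2 (isUnit_iff_ne_zero.2 h0)).map _
    exact hnil.isUnit_add_right_of_commute hu (Commute.all _ _)

lemma sigma_invol {k : Type*} [Field k] {m : ℕ} (σ : TruncPoly k m →ₐ[k] TruncPoly k m)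
    (hσ : σ (xbar k m) = xbar k m ∨ σ (xbar k m) = -xbar k m) (a : TruncPoly k m) :
    σ (σ a) = a := by
  have h : σ.comp σ = AlgHom.id k (TruncPoly k m) := by
    apply Ideal.Quotient.algHom_ext
    apply Polynomial.algHom_ext
    show σ (σ (xbar k m)) = xbar k m
    rcases hσ with h | h
    · rw [h, h]
    · rw [h, map_neg, h, neg_neg]
  exact AlgHom.congr_fun h a

lemma mem_B0' {A : Type*} [CommRing A] (σ : A → A) (hσ0 : σ 0 = 0) {a b d : A}
    (h1 : a * σ b = b * σ a) (h4 : σ b * d = σ d * b) (h5 : a * σ d = 1) (h6 : σ a * d = 1) :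
    !![a, b; 0, d] ∈ {g ∈ SLstarSet σ | g 1 0 = 0} := by
  refine ⟨⟨?_, ?_, ?_, ?_, ?_, ?_⟩, ?_⟩ <;>
    simp [SLstarSet, hσ0, h1, h4, h5, h6]

lemma B0_entries {A : Type*} [CommRing A] (σ : A → A) (hσ0 : σ 0 = 0)
    {g : Matrix (Fin 2) (Fin 2) A} (hg : g ∈ {g ∈ SLstarSet σ | g 1 0 = 0}) :
    g 1 0 = 0 ∧ g 0 0 * σ (g 0 1) = g 0 1 * σ (g 0 0) ∧
    σ (g 0 1) * g 1 1 = σ (g 1 1) * g 0 1 ∧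
    g 0 0 * σ (g 1 1) = 1 ∧ σ (g 0 0) * g 1 1 = 1 := by
  obtain ⟨⟨g1, g2, g3, g4, g5, g6⟩, g0⟩ := hg
  rw [g0, hσ0] at g5 g6
  rw [mul_zero, sub_zero] at g5
  rw [zero_mul, sub_zero] at g6
  exact ⟨g0, g1, g4, g5, g6⟩

lemma uM_mem {A : Type*} [CommRing A] (σ : A → A) (hσ0 : σ 0 = 0) (hσ1 : σ 1 = 1)
    {s : A} (hs : σ s = s) : uM s ∈ {g ∈ SLstarSet σ | g 1 0 = 0} := by
  unfold uM
  apply mem_B0' σ hσ0 <;> simp [hσ1, hs]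

/-- The set `B₀` of upper triangular matrices in `SL_*(2,A_m)` is a
subgroup, `SL_*(2,A_m) = B₀ ∪ B₀wB₀ ∪ B₀wB₀wB₀`; in particular `SL_*(2,A_m)` is
generated by the Bruhat generators and has Bruhat (`w`-)length `2`. -/
theorem SLstar_truncPoly_bruhat_decomposition
    {k : Type*} [Field k] [Fintype k] (hodd : Odd (Fintype.card k))
    {m : ℕ} (hm : 0 < m)
    (σ : TruncPoly k m →ₐ[k] TruncPoly k m)
    (hσ : σ (xbar k m) = xbar k m ∨ σ (xbar k m) = -xbar k m) :
    (1 : Matrix (Fin 2) (Fin 2) (TruncPoly k m)) ∈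
        {g ∈ SLstarSet (⇑σ) | g 1 0 = 0} ∧
    (∀ g ∈ {g ∈ SLstarSet (⇑σ) | g 1 0 = 0}, ∀ h ∈ {g ∈ SLstarSet (⇑σ) | g 1 0 = 0},
      g * h ∈ {g ∈ SLstarSet (⇑σ) | g 1 0 = 0}) ∧
    (∀ g ∈ {g ∈ SLstarSet (⇑σ) | g 1 0 = 0},
      ∃ g' ∈ {g ∈ SLstarSet (⇑σ) | g 1 0 = 0}, g * g' = 1 ∧ g' * g = 1) ∧
    (∀ g ∈ SLstarSet (⇑σ),
      g ∈ {g ∈ SLstarSet (⇑σ) | g 1 0 = 0} ∨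
      (∃ b₁ ∈ {g ∈ SLstarSet (⇑σ) | g 1 0 = 0}, ∃ b₂ ∈ {g ∈ SLstarSet (⇑σ) | g 1 0 = 0},
        g = b₁ * wM (TruncPoly k m) * b₂) ∨
      (∃ b₁ ∈ {g ∈ SLstarSet (⇑σ) | g 1 0 = 0}, ∃ b₂ ∈ {g ∈ SLstarSet (⇑σ) | g 1 0 = 0},
        ∃ b₃ ∈ {g ∈ SLstarSet (⇑σ) | g 1 0 = 0},
        g = b₁ * wM (TruncPoly k m) * b₂ * wM (TruncPoly k m) * b₃)) ∧
    (SLstarSet (⇑σ) ⊆ Submonoid.closure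
      ({g | ∃ s : TruncPoly k m, σ s = s ∧ g = uM s} ∪
       {g | ∃ t : (TruncPoly k m)ˣ, g = hM (σ : TruncPoly k m →* TruncPoly k m) t} ∪
       {wM (TruncPoly k m)})) := by
  have hinv : ∀ a : TruncPoly k m, σ (σ a) = a := sigma_invol σ hσ
  have hσ0 : σ (0 : TruncPoly k m) = 0 := map_zero σ
  have hnt : Nontrivial (TruncPoly k m) := truncPoly_nontrivial hm
  -- unit dichotomy
  have hdi : ∀ a c b d : TruncPoly k m, σ a * d - σ c * b = 1 → IsUnit a ∨ IsUnit c := by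
    intro a c b d h
    by_contra hcon
    push_neg at hcon
    obtain ⟨h1, h2⟩ := hcon
    obtain ⟨n, hn⟩ := truncPoly_isNilpotent_of_not_isUnit h1
    obtain ⟨n', hn'⟩ := truncPoly_isNilpotent_of_not_isUnit h2
    have na : IsNilpotent (σ a) := ⟨n, by rw [← map_pow, hn, map_zero]⟩
    have nc : IsNilpotent (σ c) := ⟨n', by rw [← map_pow, hn', map_zero]⟩
    have : IsNilpotent (σ a * d - σ c * b) :=
      Commute.isNilpotent_sub (Commute.all _ _)
        ((Commute.all _ _).isNilpotent_mul_right na)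
        ((Commute.all _ _).isNilpotent_mul_right nc)
    rw [h] at this
    obtain ⟨j, hj⟩ := this
    rw [one_pow] at hj
    exact one_ne_zero hj
  -- part 1
  have hpart1 : (1 : Matrix (Fin 2) (Fin 2) (TruncPoly k m)) ∈
      {g ∈ SLstarSet (⇑σ) | g 1 0 = 0} := by
    refine ⟨⟨?_, ?_, ?_, ?_, ?_, ?_⟩, ?_⟩ <;> simp [SLstarSet, Matrix.one_apply]
  -- part 2
  have hpart2 : ∀ g ∈ {g ∈ SLstarSet (⇑σ) | g 1 0 = 0},
      ∀ h ∈ {g ∈ SLstarSet (⇑σ) | g 1 0 = 0},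
      g * h ∈ {g ∈ SLstarSet (⇑σ) | g 1 0 = 0} := by
    intro g hg h hh
    obtain ⟨g0, g1, g4, g5, g6⟩ := B0_entries _ hσ0 hg
    obtain ⟨h0, h1, h4, h5, h6⟩ := B0_entries _ hσ0 hh
    have e00 : (g * h) 0 0 = g 0 0 * h 0 0 := by
      rw [Matrix.mul_apply, Fin.sum_univ_two, h0, mul_zero, add_zero]
    have e01 : (g * h) 0 1 = g 0 0 * h 0 1 + g 0 1 * h 1 1 := by
      rw [Matrix.mul_apply, Fin.sum_univ_two]
    have e10 : (g * h) 1 0 = 0 := by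
      rw [Matrix.mul_apply, Fin.sum_univ_two, h0, g0, mul_zero, zero_mul, add_zero]
    have e11 : (g * h) 1 1 = g 1 1 * h 1 1 := by
      rw [Matrix.mul_apply, Fin.sum_univ_two, g0, zero_mul, zero_add]
    refine ⟨⟨?_, ?_, ?_, ?_, ?_, ?_⟩, e10⟩ <;>
        simp only [e00, e01, e10, e11, map_mul, map_add, map_zero]
    · linear_combination (g 0 0 * σ (g 0 0)) * h1 + (h 0 0 * σ (h 1 1)) * g1 +
        (g 0 1 * σ (g 0 0)) * h5 - (g 0 1 * σ (g 0 0)) * h6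
    · ring
    · ring
    · linear_combination (σ (h 1 1) * h 1 1) * g4 + (σ (h 0 1) * h 1 1) * g6 + h4 -
        (h 0 1 * σ (h 1 1)) * g5
    · linear_combination (h 0 0 * σ (h 1 1)) * g5 + h5
    · linear_combination (σ (h 0 0) * h 1 1) * g6 + h6
  -- part 3
  have hpart3 : ∀ g ∈ {g ∈ SLstarSet (⇑σ) | g 1 0 = 0},
      ∃ g' ∈ {g ∈ SLstarSet (⇑σ) | g 1 0 = 0}, g * g' = 1 ∧ g' * g = 1 := by
    intro g hg
    obtain ⟨g0, g1, g4, g5, g6⟩ := B0_entries _ hσ0 hg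
    refine ⟨!![σ (g 1 1), -(σ (g 1 1) * σ (g 0 0) * g 0 1); 0, σ (g 0 0)], ?_, ?_, ?_⟩
    · apply mem_B0' _ hσ0
      · simp only [map_neg, map_mul, hinv]
        linear_combination (-(σ (g 1 1) * g 1 1)) * g1
      · simp only [map_neg, map_mul, hinv]
        linear_combination (-(g 0 0 * σ (g 0 0))) * g4
      · simp only [hinv]
        linear_combination g5
      · simp only [hinv]
        linear_combination g6
    · ext i j
      fin_cases i <;> fin_cases j <;>
        simp [Matrix.mul_apply, Fin.sum_univ_two, g0, Matrix.one_apply]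
      · linear_combination g5
      · linear_combination (-(σ (g 0 0) * g 0 1)) * g5
      · linear_combination g6
    · ext i j
      fin_cases i <;> fin_cases j <;>
        simp [Matrix.mul_apply, Fin.sum_univ_two, g0, Matrix.one_apply]
      · linear_combination g5
      · linear_combination (-(σ (g 1 1) * g 0 1)) * g6
      · linear_combination g6
  -- part 4
  have hpart4 : ∀ g ∈ SLstarSet (⇑σ),
      g ∈ {g ∈ SLstarSet (⇑σ) | g 1 0 = 0} ∨
      (∃ b₁ ∈ {g ∈ SLstarSet (⇑σ) | g 1 0 = 0}, ∃ b₂ ∈ {g ∈ SLstarSet (⇑σ) | g 1 0 = 0},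
        g = b₁ * wM (TruncPoly k m) * b₂) ∨
      (∃ b₁ ∈ {g ∈ SLstarSet (⇑σ) | g 1 0 = 0}, ∃ b₂ ∈ {g ∈ SLstarSet (⇑σ) | g 1 0 = 0},
        ∃ b₃ ∈ {g ∈ SLstarSet (⇑σ) | g 1 0 = 0},
        g = b₁ * wM (TruncPoly k m) * b₂ * wM (TruncPoly k m) * b₃) := by
    intro g hg
    obtain ⟨g1, g2, g3, g4, g5, g6⟩ := hg
    by_cases hau : IsUnit (g 0 0)
    · right; right
      obtain ⟨ua, hua⟩ := hau
      set a' : TruncPoly k m := ((ua⁻¹ : (TruncPoly k m)ˣ) : TruncPoly k m) with ha'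
      have haa' : g 0 0 * a' = 1 := by rw [← hua]; exact ua.mul_inv
      have hσaa' : σ (g 0 0) * σ a' = 1 := by rw [← map_mul, haa', map_one]
      have hsym : σ a' * σ (g 1 0) = a' * g 1 0 := by
        linear_combination (-(σ a' * σ (g 1 0))) * haa' + (a' * g 1 0) * hσaa' -
          (a' * σ a') * g3
      have hg5' : g 0 0 * σ (g 1 1) - g 1 0 * σ (g 0 1) = 1 := by
        have h6 := congrArg σ g6
        simp only [map_sub, map_mul, map_one, hinv] at h6
        linear_combination h6
      refine ⟨1, hpart1, uM (-(a' * g 1 0)), ?_,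
        !![-(g 0 0), -(g 0 1); 0, -(g 1 1 - g 1 0 * a' * g 0 1)], ?_, ?_⟩
      · apply uM_mem _ hσ0 (map_one σ)
        simp only [map_neg, map_mul]
        rw [hsym]
      · apply mem_B0' _ hσ0
        · simp only [map_neg]
          linear_combination g1
        · simp only [map_neg, map_sub, map_mul]
          linear_combination g4 + (σ (g 0 1) * g 0 1) * hsym
        · simp only [map_neg, map_sub, map_mul]
          linear_combination hg5' - (σ (g 0 1) * g 1 0) * hσaa' + (σ (g 0 1) * σ a') * g3
        · simp only [map_neg, map_sub, map_mul]
          linear_combination g6 - (g 0 1 * σ (g 1 0)) * haa' - (g 0 1 * a') * g3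
      · ext i j
        fin_cases i <;> fin_cases j <;>
          simp [wM, uM, Matrix.mul_apply, Fin.sum_univ_two, Matrix.one_apply]
        all_goals try ring1
        all_goals linear_combination (-(g 1 0)) * haa'
    · rcases hdi _ _ _ _ g6 with h | hcu
      · exact absurd h hau
      right; left
      obtain ⟨uc, huc⟩ := hcu
      set c' : TruncPoly k m := ((uc⁻¹ : (TruncPoly k m)ˣ) : TruncPoly k m) with hc'
      have hcc' : g 1 0 * c' = 1 := by rw [← huc]; exact uc.mul_inv
      have hσcc' : σ (g 1 0) * σ c' = 1 := by rw [← map_mul, hcc', map_one]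
      have hsym2 : σ c' * σ (g 1 1) = c' * g 1 1 := by
        linear_combination (-(σ c' * σ (g 1 1))) * hcc' + (c' * g 1 1) * hσcc' +
          (c' * σ c') * g2
      refine ⟨!![-(σ c'), -(g 0 0); 0, -(g 1 0)], ?_, uM (c' * g 1 1), ?_, ?_⟩
      · apply mem_B0' _ hσ0
        · simp only [map_neg, hinv]
          linear_combination (-(σ c' * σ (g 0 0))) * hcc' + (c' * g 0 0) * hσcc' +
            (c' * σ c') * g3
        · simp only [map_neg]
          linear_combination g3
        · simp only [map_neg]
          linear_combination hσcc'
        · simp only [map_neg, hinv]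
          linear_combination hcc'
      · apply uM_mem _ hσ0 (map_one σ)
        simp only [map_mul]
        rw [hsym2]
      · ext i j
        fin_cases i <;> fin_cases j <;>
          simp [wM, uM, Matrix.mul_apply, Fin.sum_univ_two]
        all_goals try ring1
        · linear_combination (-(σ c')) * g5 - (g 0 1) * hσcc' + (g 0 0) * hsym2
        · linear_combination (-(g 1 1)) * hcc'
  -- part 5
  have hw : wM (TruncPoly k m) ∈ Submonoid.closure
      ({g | ∃ s : TruncPoly k m, σ s = s ∧ g = uM s} ∪
       {g | ∃ t : (TruncPoly k m)ˣ, g = hM (σ : TruncPoly k m →* TruncPoly k m) t} ∪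
       {wM (TruncPoly k m)}) :=
    Submonoid.subset_closure (Set.mem_union_right _ rfl)
  have hB0closure : ∀ g ∈ {g ∈ SLstarSet (⇑σ) | g 1 0 = 0},
      g ∈ Submonoid.closure
      ({g | ∃ s : TruncPoly k m, σ s = s ∧ g = uM s} ∪
       {g | ∃ t : (TruncPoly k m)ˣ, g = hM (σ : TruncPoly k m →* TruncPoly k m) t} ∪
       {wM (TruncPoly k m)}) := by
    intro g hg
    obtain ⟨g0, g1, g4, g5, g6⟩ := B0_entries _ hσ0 hg
    set t : (TruncPoly k m)ˣ := ⟨g 0 0, σ (g 1 1), g5, (mul_comm _ _).trans g5⟩ with ht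
    have h2 : (((Units.map (σ : TruncPoly k m →* TruncPoly k m) t)⁻¹ :
        (TruncPoly k m)ˣ) : TruncPoly k m) = g 1 1 := by
      rw [Units.coe_map_inv]
      exact hinv _
    have hhM : hM (σ : TruncPoly k m →* TruncPoly k m) t = !![g 0 0, 0; 0, g 1 1] := by
      unfold hM
      rw [h2]
    have hs : σ (σ (g 1 1) * g 0 1) = σ (g 1 1) * g 0 1 := by
      simp only [map_mul, hinv]
      linear_combination g4
    have hfact : g = hM (σ : TruncPoly k m →* TruncPoly k m) t *
        uM (σ (g 1 1) * g 0 1) := by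
      rw [hhM]
      ext i j
      fin_cases i <;> fin_cases j <;>
        simp [uM, Matrix.mul_apply, Fin.sum_univ_two, g0]
      linear_combination (-(g 0 1)) * g5
    rw [hfact]
    exact mul_mem
      (Submonoid.subset_closure (Set.mem_union_left _ (Set.mem_union_right _ ⟨t, rfl⟩)))
      (Submonoid.subset_closure (Set.mem_union_left _ (Set.mem_union_left _
        ⟨σ (g 1 1) * g 0 1, hs, rfl⟩)))
  refine ⟨hpart1, hpart2, hpart3, hpart4, ?_⟩
  intro g hg
  rcases hpart4 g hg with h | ⟨b₁, hb₁, b₂, hb₂, rfl⟩ | ⟨b₁, hb₁, b₂, hb₂, b₃, hb₃, rfl⟩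
  · exact hB0closure g h
  · exact mul_mem (mul_mem (hB0closure _ hb₁) hw) (hB0closure _ hb₂)
  · exact mul_mem (mul_mem (mul_mem (mul_mem (hB0closure _ hb₁) hw) (hB0closure _ hb₂)) hw)
      (hB0closure _ hb₃)
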